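/- Let γ_k = γ_0/(k+1)^a and μ_k = 2^b μ_0/(k+κ)^b, where κ = 2 if k is even and κ = 1 if k is odd, with positive scalars γ_0, μ_0 satisfying γ_0 μ_0 ≤ L(m+n), and positive scalars a, b, δ with δ ≤ 1, a/b > 1 + 2δ(n+m), a + b ≤ 1, a + 2b > 1, and a − δb(m+n) > 0.5. Then μ_k satisfies μ_k = μ_{k−1} for odd k and μ_k < μ_{k−1} for even k, and the pair (γ_k, μ_k) satisfies Assumption 4 with λ_min = 1/((m+n)(L + τ μ_0^δ)) and α = −δ(n+m). -/

import Mathlib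

open Filter Real

private lemma aux_summable_shift (p : ℝ) :
    Summable (fun k : ℕ => ((k : ℝ) + 1) ^ (-p)) ↔ 1 < p := by
  have h : (fun k : ℕ => ((k : ℝ) + 1) ^ (-p)) = (fun k : ℕ => (((k + 1 : ℕ) : ℝ)) ^ (-p)) := by
    funext k; push_cast; ring_nf
  have h2 : Summable (fun k : ℕ => (((k + 1 : ℕ) : ℝ)) ^ (-p)) ↔
      Summable (fun n : ℕ => (n : ℝ) ^ (-p)) :=
    summable_nat_add_iff (f := fun n : ℕ => (n : ℝ) ^ (-p)) 1
  rw [h, h2, Real.summable_nat_rpow]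
  constructor <;> intro h' <;> linarith

private lemma aux_summable_of_le (f : ℕ → ℝ) (C r : ℝ) (hr : 1 < r)
    (h0 : ∀ k, 0 ≤ f k) (hle : ∀ k, f k ≤ C * ((k : ℝ) + 1) ^ (-r)) : Summable f :=
  Summable.of_nonneg_of_le h0 hle (((aux_summable_shift r).mpr hr).mul_left C)

private lemma aux_tendsto_zero (C p : ℝ) (hp : 0 < p) :
    Tendsto (fun k : ℕ => C * ((k : ℝ) + 1) ^ (-p)) atTop (nhds 0) := by
  have h1 : Tendsto (fun k : ℕ => ((k : ℝ) + 1) ^ p) atTop atTop :=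
    (tendsto_rpow_atTop hp).comp
      (tendsto_atTop_add_const_right atTop 1 tendsto_natCast_atTop_atTop)
  have h2 := h1.inv_tendsto_atTop
  have h3 := h2.const_mul C
  rw [mul_zero] at h3
  refine h3.congr fun k => ?_
  simp [Real.rpow_neg (by positivity : (0:ℝ) ≤ (k : ℝ) + 1)]

/-- Lemma 4.5: feasible tuning sequences for a.s. convergence.
With `γ k = γ₀/(k+1)^a` and `μ k = 2^b μ₀/(k+κ)^b` (`κ = 2` for even `k`, `κ = 1` for odd
`k`), positive `γ₀, μ₀` with `γ₀ μ₀ ≤ L(m+n)`, and positive `a, b, δ ≤ 1` with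
`a/b > 1 + 2δ(n+m)`, `a + b ≤ 1`, `a + 2b > 1`, `a − δb(m+n) > 1/2`, the sequence `μ`
satisfies the alternating rule and `(γ, μ)` satisfies Assumption 4 with
`λ_min = 1/((m+n)(L + τ μ₀^δ))` and `α = −δ(n+m)`. -/
theorem stmt8 (n m : ℕ) (hn : 1 ≤ n) (hm : 1 ≤ m)
    (L τ γ0 μ0 a b δ : ℝ)
    (hL : 0 < L) (hτ : 0 < τ) (hγ0 : 0 < γ0) (hμ0 : 0 < μ0)
    (hγμ : γ0 * μ0 ≤ L * ((m : ℝ) + n))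
    (ha : 0 < a) (hb : 0 < b) (hδ0 : 0 < δ) (hδ1 : δ ≤ 1)
    (hab1 : 1 + 2 * δ * ((n : ℝ) + m) < a / b)
    (hab2 : a + b ≤ 1) (hab3 : 1 < a + 2 * b)
    (hab4 : 1 / 2 < a - δ * b * ((m : ℝ) + n))
    (γ μ : ℕ → ℝ)
    (hγdef : ∀ k, γ k = γ0 / ((k : ℝ) + 1) ^ a)
    (hμdef : ∀ k, μ k = 2 ^ b * μ0 / ((k : ℝ) + (if Even k then 2 else 1)) ^ b) :
    -- the alternating rule (2.3) for the regularization parameter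
    (∀ k, 1 ≤ k → (Odd k → μ k = μ (k - 1)) ∧ (Even k → μ k < μ (k - 1))) ∧
    -- Assumption 4(a)
    Tendsto (fun k => γ k * μ k ^ (2 * (-δ * ((n : ℝ) + m)) - 1)) atTop (nhds 0) ∧
    -- Assumption 4(b)
    ((∀ k, μ (k + 1) ≤ μ k) ∧ Tendsto μ atTop (nhds 0)) ∧
    -- Assumption 4(c)
    (∀ k, (1 / (((m : ℝ) + n) * (L + τ * μ0 ^ δ))) * γ k * μ k ≤ 1) ∧
    -- Assumption 4(d)
    Tendsto (fun N => ∑ k ∈ Finset.range N, γ k * μ k) atTop atTop ∧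
    -- Assumption 4(e)
    Summable (fun k => μ k ^ 2 * γ k) ∧
    -- Assumption 4(f)
    Summable (fun k => γ k ^ 2 * μ k ^ (2 * (-δ * ((n : ℝ) + m)))) := by
  have hmn : (0:ℝ) < (m : ℝ) + n := by
    have h1 : (1:ℝ) ≤ (m : ℝ) := by exact_mod_cast hm
    have h2 : (0:ℝ) ≤ (n : ℝ) := Nat.cast_nonneg n
    linarith
  have hk1 : ∀ k : ℕ, (0:ℝ) < (k : ℝ) + 1 := fun k => by positivity
  have hkκ : ∀ k : ℕ, (0:ℝ) < (k : ℝ) + (if Even k then 2 else 1) := fun k => by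
    split <;> positivity
  have hγpos : ∀ k, 0 < γ k := fun k => by
    rw [hγdef k]; exact div_pos hγ0 (Real.rpow_pos_of_pos (hk1 k) a)
  have hμpos : ∀ k, 0 < μ k := fun k => by
    rw [hμdef k]
    exact div_pos (by positivity) (Real.rpow_pos_of_pos (hkκ k) b)
  -- γ in product form
  have hγeq : ∀ k, γ k = γ0 * ((k : ℝ) + 1) ^ (-a) := fun k => by
    rw [hγdef k, Real.rpow_neg (hk1 k).le, div_eq_mul_inv]
  -- upper bound for μ
  have hμub : ∀ k, μ k ≤ (2 : ℝ) ^ b * μ0 * ((k : ℝ) + 1) ^ (-b) := by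
    intro k
    rw [hμdef k, Real.rpow_neg (hk1 k).le, ← div_eq_mul_inv]
    have hden : ((k : ℝ) + 1) ^ b ≤ ((k : ℝ) + (if Even k then 2 else 1)) ^ b := by
      apply Real.rpow_le_rpow (hk1 k).le _ hb.le
      split <;> norm_num
    exact div_le_div_of_nonneg_left (by positivity) (Real.rpow_pos_of_pos (hk1 k) b) hden
  -- lower bound for μ
  have hμlb : ∀ k : ℕ, μ0 * ((k : ℝ) + 1) ^ (-b) ≤ μ k := by
    intro k
    rw [hμdef k, Real.rpow_neg (hk1 k).le, ← div_eq_mul_inv]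
    have hden : ((k : ℝ) + (if Even k then 2 else 1)) ^ b ≤ (2:ℝ) ^ b * ((k : ℝ) + 1) ^ b := by
      rw [← Real.mul_rpow (by norm_num) (hk1 k).le]
      apply Real.rpow_le_rpow (hkκ k).le _ hb.le
      have : (0:ℝ) ≤ (k : ℝ) := Nat.cast_nonneg k
      split <;> linarith
    rw [div_le_div_iff₀ (Real.rpow_pos_of_pos (hk1 k) b) (Real.rpow_pos_of_pos (hkκ k) b)]
    calc μ0 * ((k : ℝ) + (if Even k then 2 else 1)) ^ b
        ≤ μ0 * ((2:ℝ) ^ b * ((k : ℝ) + 1) ^ b) := by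
          exact mul_le_mul_of_nonneg_left hden hμ0.le
      _ = 2 ^ b * μ0 * ((k : ℝ) + 1) ^ b := by ring
  -- μ k ≤ μ0
  have hμle0 : ∀ k, μ k ≤ μ0 := by
    intro k
    rw [hμdef k]
    have h2 : (2:ℝ) ≤ (k : ℝ) + (if Even k then 2 else 1) := by
      rcases Nat.even_or_odd k with he | ho
      · simp only [if_pos he]
        have : (0:ℝ) ≤ (k : ℝ) := Nat.cast_nonneg k
        linarith
      · rw [if_neg (Nat.not_even_iff_odd.mpr ho)]
        have : (1:ℝ) ≤ (k : ℝ) := by exact_mod_cast ho.pos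
        linarith
    have hden : (2:ℝ) ^ b ≤ ((k : ℝ) + (if Even k then 2 else 1)) ^ b :=
      Real.rpow_le_rpow (by norm_num) h2 hb.le
    calc (2:ℝ) ^ b * μ0 / ((k : ℝ) + (if Even k then 2 else 1)) ^ b
        ≤ (2:ℝ) ^ b * μ0 / (2:ℝ) ^ b := by
          apply div_le_div_of_nonneg_left (by positivity) (by positivity) hden
      _ = μ0 := by
          rw [mul_comm, mul_div_assoc, div_self (ne_of_gt (Real.rpow_pos_of_pos two_pos b)),
            mul_one]
  -- γ k ≤ γ0
  have hγle0 : ∀ k, γ k ≤ γ0 := by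
    intro k
    rw [hγdef k]
    apply div_le_self hγ0.le
    calc (1:ℝ) = (1:ℝ) ^ a := (Real.one_rpow a).symm
      _ ≤ ((k : ℝ) + 1) ^ a := Real.rpow_le_rpow zero_le_one (by
          have : (0:ℝ) ≤ (k : ℝ) := Nat.cast_nonneg k; linarith) ha.le
  have hbfromdiv : b * (1 + 2 * δ * ((n : ℝ) + m)) < a := by
    have := (lt_div_iff₀ hb).mp hab1
    linarith
  refine ⟨?_, ?_, ⟨?_, ?_⟩, ?_, ?_, ?_, ?_⟩
  · -- alternating rule
    intro k hk
    obtain ⟨j, rfl⟩ : ∃ j, k = j + 1 := ⟨k - 1, (Nat.succ_pred_eq_of_pos hk).symm⟩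
    constructor
    · intro hodd
      have hje : Even j := by
        rcases Nat.even_or_odd j with h | h
        · exact h
        · exact absurd hodd (Nat.not_odd_iff_even.mpr h.add_one)
      rw [Nat.add_sub_cancel, hμdef (j + 1), hμdef j,
        if_neg (by simp [Nat.even_add_one, hje]), if_pos hje]
      push_cast
      ring_nf
    · intro heven
      have hjo : ¬Even j := by
        intro h; exact (Nat.even_add_one.mp heven) h
      rw [Nat.add_sub_cancel, hμdef (j + 1), hμdef j, if_pos heven, if_neg hjo]
      push_cast
      have hlt : ((j : ℝ) + 1) ^ b < ((j : ℝ) + 1 + 2) ^ b := by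
        apply Real.rpow_lt_rpow (hk1 j).le (by linarith) hb
      exact div_lt_div_of_pos_left (by positivity) (Real.rpow_pos_of_pos (hk1 j) b) hlt
  · -- Assumption 4(a)
    set p : ℝ := 2 * (-δ * ((n : ℝ) + m)) - 1 with hp
    have hpneg : p ≤ 0 := by
      have : 0 < δ * ((n : ℝ) + m) := by
        have : (0:ℝ) < (n : ℝ) + m := by linarith
        positivity
      simp only [hp]; nlinarith
    set q : ℝ := a + b * p with hq
    have hqpos : 0 < q := by simp only [hq, hp]; nlinarith
    apply squeeze_zero (g := fun k : ℕ => (γ0 * μ0 ^ p) * ((k : ℝ) + 1) ^ (-q))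
    · intro k
      exact mul_nonneg (hγpos k).le (Real.rpow_pos_of_pos (hμpos k) p).le
    · intro k
      have h1 : μ k ^ p ≤ (μ0 * ((k : ℝ) + 1) ^ (-b)) ^ p :=
        Real.rpow_le_rpow_of_nonpos (by positivity) (hμlb k) hpneg
      have h2 : (μ0 * ((k : ℝ) + 1) ^ (-b)) ^ p = μ0 ^ p * ((k : ℝ) + 1) ^ (-b * p) := by
        rw [Real.mul_rpow hμ0.le (by positivity), ← Real.rpow_mul (hk1 k).le]
      calc γ k * μ k ^ p
          ≤ (γ0 * ((k : ℝ) + 1) ^ (-a)) * (μ0 ^ p * ((k : ℝ) + 1) ^ (-b * p)) := by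
            rw [← h2, ← hγeq]
            exact mul_le_mul_of_nonneg_left h1 (hγpos k).le
        _ = (γ0 * μ0 ^ p) * (((k : ℝ) + 1) ^ (-a) * ((k : ℝ) + 1) ^ (-b * p)) := by ring
        _ = (γ0 * μ0 ^ p) * ((k : ℝ) + 1) ^ (-q) := by
            rw [← Real.rpow_add (hk1 k), hq]; ring_nf
    · exact aux_tendsto_zero _ q hqpos
  · -- μ nonincreasing
    intro k
    rcases Nat.even_or_odd k with he | ho
    · rw [hμdef (k + 1), hμdef k, if_neg (by simp [Nat.even_add_one, he]), if_pos he]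
      push_cast
      ring_nf
      exact le_rfl
    · have hko : ¬Even k := by exact Nat.not_even_iff_odd.mpr ho
      rw [hμdef (k + 1), hμdef k, if_pos (Nat.even_add_one.mpr hko), if_neg hko]
      push_cast
      apply div_le_div_of_nonneg_left (by positivity) (Real.rpow_pos_of_pos (hk1 k) b)
      exact Real.rpow_le_rpow (hk1 k).le (by linarith) hb.le
  · -- μ → 0
    apply squeeze_zero (g := fun k : ℕ => ((2:ℝ) ^ b * μ0) * ((k : ℝ) + 1) ^ (-b))
      (fun k => (hμpos k).le) (fun k => hμub k)
    exact aux_tendsto_zero _ b hb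
  · -- Assumption 4(c)
    intro k
    set D : ℝ := ((m : ℝ) + n) * (L + τ * μ0 ^ δ) with hD
    have hτμ : 0 < τ * μ0 ^ δ := by positivity
    have hDpos : 0 < D := by
      apply mul_pos hmn; linarith
    have hgm : γ k * μ k ≤ D := by
      calc γ k * μ k ≤ γ0 * μ0 :=
            mul_le_mul (hγle0 k) (hμle0 k) (hμpos k).le hγ0.le
        _ ≤ L * ((m : ℝ) + n) := hγμ
        _ ≤ D := by rw [hD]; nlinarith
    rw [mul_assoc]
    calc 1 / D * (γ k * μ k) ≤ 1 / D * D := by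
          exact mul_le_mul_of_nonneg_left hgm (by positivity)
      _ = 1 := one_div_mul_cancel hDpos.ne'
  · -- Assumption 4(d)
    have hnonneg : ∀ k, 0 ≤ γ k * μ k := fun k => (mul_pos (hγpos k) (hμpos k)).le
    rw [← not_summable_iff_tendsto_nat_atTop_of_nonneg hnonneg]
    intro hsum
    have hlow : ∀ k : ℕ, (γ0 * μ0) * ((k : ℝ) + 1) ^ (-(a + b)) ≤ γ k * μ k := by
      intro k
      have h1 : γ0 * ((k : ℝ) + 1) ^ (-a) * (μ0 * ((k : ℝ) + 1) ^ (-b)) ≤ γ k * μ k := by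
        rw [← hγeq k]
        exact mul_le_mul_of_nonneg_left (hμlb k) (hγpos k).le
      calc (γ0 * μ0) * ((k : ℝ) + 1) ^ (-(a + b))
          = γ0 * ((k : ℝ) + 1) ^ (-a) * (μ0 * ((k : ℝ) + 1) ^ (-b)) := by
            rw [show -(a + b) = -a + -b by ring, Real.rpow_add (hk1 k)]; ring
        _ ≤ γ k * μ k := h1
    have hsum2 : Summable (fun k : ℕ => (γ0 * μ0) * ((k : ℝ) + 1) ^ (-(a + b))) :=
      Summable.of_nonneg_of_le (fun k => by positivity) hlow hsum
    have hsum3 : Summable (fun k : ℕ => ((k : ℝ) + 1) ^ (-(a + b))) :=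
      (summable_mul_left_iff (by positivity : (γ0 * μ0) ≠ 0)).mp hsum2
    have := (aux_summable_shift (a + b)).mp hsum3
    linarith
  · -- Assumption 4(e)
    apply aux_summable_of_le _ (((2:ℝ) ^ b * μ0) ^ 2 * γ0) (a + 2 * b) hab3
    · intro k
      exact mul_nonneg (pow_nonneg (hμpos k).le 2) (hγpos k).le
    · intro k
      have h1 : μ k ^ 2 ≤ ((2:ℝ) ^ b * μ0 * ((k : ℝ) + 1) ^ (-b)) ^ 2 :=
        pow_le_pow_left₀ (hμpos k).le (hμub k) 2
      calc μ k ^ 2 * γ k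
          ≤ ((2:ℝ) ^ b * μ0 * ((k : ℝ) + 1) ^ (-b)) ^ 2 * (γ0 * ((k : ℝ) + 1) ^ (-a)) := by
            rw [← hγeq]
            exact mul_le_mul_of_nonneg_right h1 (hγpos k).le
        _ = ((2:ℝ) ^ b * μ0) ^ 2 * γ0 *
              (((k : ℝ) + 1) ^ (-b) * ((k : ℝ) + 1) ^ (-b) * ((k : ℝ) + 1) ^ (-a)) := by
            ring
        _ = ((2:ℝ) ^ b * μ0) ^ 2 * γ0 * ((k : ℝ) + 1) ^ (-(a + 2 * b)) := by
            rw [← Real.rpow_add (hk1 k), ← Real.rpow_add (hk1 k)]; ring_nf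
  · -- Assumption 4(f)
    set e : ℝ := 2 * (-δ * ((n : ℝ) + m)) with he
    have heneg : e ≤ 0 := by
      have : (0:ℝ) < (n : ℝ) + m := by linarith
      simp only [he]; nlinarith
    set r : ℝ := 2 * a + b * e with hr
    have hrgt : 1 < r := by simp only [hr, he]; nlinarith
    apply aux_summable_of_le _ (γ0 ^ 2 * μ0 ^ e) r hrgt
    · intro k
      exact mul_nonneg (pow_nonneg (hγpos k).le 2) (Real.rpow_pos_of_pos (hμpos k) e).le
    · intro k
      have h1 : μ k ^ e ≤ (μ0 * ((k : ℝ) + 1) ^ (-b)) ^ e :=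
        Real.rpow_le_rpow_of_nonpos (by positivity) (hμlb k) heneg
      have h2 : (μ0 * ((k : ℝ) + 1) ^ (-b)) ^ e = μ0 ^ e * ((k : ℝ) + 1) ^ (-b * e) := by
        rw [Real.mul_rpow hμ0.le (by positivity), ← Real.rpow_mul (hk1 k).le]
      calc γ k ^ 2 * μ k ^ e
          ≤ (γ0 * ((k : ℝ) + 1) ^ (-a)) ^ 2 * (μ0 ^ e * ((k : ℝ) + 1) ^ (-b * e)) := by
            rw [← h2, ← hγeq]
            exact mul_le_mul_of_nonneg_left h1 (by positivity)
        _ = γ0 ^ 2 * μ0 ^ e *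
              (((k : ℝ) + 1) ^ (-a) * ((k : ℝ) + 1) ^ (-a) * ((k : ℝ) + 1) ^ (-b * e)) := by
            ring
        _ = γ0 ^ 2 * μ0 ^ e * ((k : ℝ) + 1) ^ (-r) := by
            rw [← Real.rpow_add (hk1 k), ← Real.rpow_add (hk1 k), hr]; ring_nf
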